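/- Convolution formula for partial Bell polynomials (Lemma from [BGW12, Corollary 11]): Let x : ℕ → ℚ be a sequence and let B(n,k) := (n!/k!)·∑ x_{m_1}/m_1! ··· x_{m_k}/m_k!, the sum over all k-tuples (m_1,…,m_k) of positive integers with m_1+⋯+m_k = n (so B(n,k) is the partial Bell polynomial B_{n,k}(x_1,x_2,…)). Fix n, k ∈ ℕ, τ ∈ ℚ, and an affine function α(ℓ,m) = α₀ + α₁ℓ + α₂m with α₀, α₁, α₂ ∈ ℚ of total degree at most one in ℓ and m. Assume α(ℓ,m) ≠ 0 and τ − α(ℓ,m) ≠ 0 for all 0 ≤ ℓ ≤ k and ℓ ≤ m ≤ n. Then ∑_{ℓ=0}^{k} ∑_{m=ℓ}^{n} [τ·C(α(ℓ,m), k−ℓ)·C(τ−α(ℓ,m), ℓ)·C(n,m)] / [α(ℓ,m)·(τ−α(ℓ,m))·C(k,ℓ)] · B(m,ℓ)·B(n−m,k−ℓ) = [(τ − α(0,0) + α(k,n)) / (α(k,n)·(τ − α(0,0)))]·C(τ,k)·B(n,k). -/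

import Mathlib

open Finset Polynomial

def ffall (z : ℚ) (j : ℕ) : ℚ := ∏ i ∈ Finset.range j, (z - (i : ℚ))

lemma ffall_succ (z : ℚ) (j : ℕ) : ffall z (j + 1) = ffall z j * (z - j) :=
  Finset.prod_range_succ _ _

lemma key_poly {ι : Type*} [DecidableEq ι] (τ : ℚ) (s : Finset ι) (b : ι → ℚ) (j : ℕ) :
    ∃ q : Polynomial ℚ, q.degree < (j : ℕ) ∧ ∀ A : ℚ,
      (∀ S ∈ s.powerset, A + ∑ i ∈ S, b i ≠ 0) →
      ∑ S ∈ s.powerset, ffall (A + ∑ i ∈ S, b i) (s.card - S.card)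
          * ffall (τ - (A + ∑ i ∈ S, b i)) (S.card + j) / (A + ∑ i ∈ S, b i)
        = ffall τ (s.card + j) / (A + ∑ i ∈ s, b i) + q.eval A := by
  induction s using Finset.induction_on generalizing j with
  | empty =>
      set P : ℚ[X] := (∏ i ∈ Finset.range j, (C τ - X - C (i : ℚ))) - C (ffall τ j) with hP
      obtain ⟨q, hq⟩ : (X : ℚ[X]) ∣ P := by
        rw [Polynomial.X_dvd_iff, Polynomial.coeff_zero_eq_eval_zero]
        simp [hP, eval_prod, ffall]
      have hPdeg : P.degree ≤ (j : ℕ) := by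
        refine le_trans (degree_sub_le _ _) ?_
        rw [max_le_iff]
        constructor
        · refine le_trans (degree_prod_le _ _) ?_
          refine le_trans (Finset.sum_le_card_nsmul _ _ 1 ?_) ?_
          · intro i _
            have hrw : C τ - X - C (i : ℚ) = C (τ - i) - X := by rw [map_sub]; ring
            rw [hrw]
            refine le_trans (degree_sub_le _ _) ?_
            refine max_le (le_trans degree_C_le ?_) (le_of_eq degree_X)
            decide
          · simp
        · exact le_trans degree_C_le (by exact_mod_cast Nat.cast_nonneg' j)
      refine ⟨q, ?_, ?_⟩
      · rcases eq_or_ne q 0 with h0 | h0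
        · simp [h0]
        · have : P.degree = 1 + q.degree := by rw [hq, degree_mul, degree_X]
          rw [this] at hPdeg
          rw [degree_eq_natDegree h0] at hPdeg ⊢
          have : (1 + q.natDegree : ℕ) ≤ j := by exact_mod_cast hPdeg
          exact_mod_cast Nat.lt_of_lt_of_le (Nat.lt_succ_self _) (by omega)
      · intro A hA
        have hA0 : A ≠ 0 := by simpa using hA ∅ (by simp)
        have hev : ffall (τ - A) j - ffall τ j = A * q.eval A := by
          have := congrArg (Polynomial.eval A) hq
          simp only [hP, eval_sub, eval_prod, eval_C, eval_X, eval_mul] at this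
          simpa [ffall] using this
        simp only [Finset.powerset_empty, Finset.sum_singleton, Finset.sum_empty, add_zero,
          Finset.card_empty, Nat.zero_sub, Nat.sub_zero, zero_add]
        rw [show ffall A 0 = 1 from rfl]
        field_simp
        linear_combination hev
  | @insert a s' ha ih =>
      obtain ⟨q1, hq1deg, hq1⟩ := ih j
      obtain ⟨q2, hq2deg, hq2⟩ := ih (j + 1)
      set r := s'.card with hr
      refine ⟨C (τ - ((r + j : ℕ) : ℚ)) * q1 + (q2.comp (X + C (b a)) - q2), ?_, ?_⟩
      · refine lt_of_le_of_lt (degree_add_le _ _) (max_lt ?_ ?_)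
        · refine lt_of_le_of_lt ?_ hq1deg
          calc (C (τ - ((r + j : ℕ) : ℚ)) * q1).degree
              ≤ (C (τ - ((r + j : ℕ) : ℚ))).degree + q1.degree := degree_mul_le _ _
            _ ≤ 0 + q1.degree := add_le_add degree_C_le le_rfl
            _ = q1.degree := zero_add _
        · rcases eq_or_ne q2 0 with h0 | h0
          · simp [h0]
          · have hlc : (q2.comp (X + C (b a))).leadingCoeff = q2.leadingCoeff := by
              rw [leadingCoeff_comp (by rw [natDegree_X_add_C]; norm_num)]
              simp [leadingCoeff_X_add_C]
            have hcompne : q2.comp (X + C (b a)) ≠ 0 := by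
              intro h
              exact h0 (leadingCoeff_eq_zero.mp (by rw [← hlc, h, leadingCoeff_zero]))
            have hdeq : (q2.comp (X + C (b a))).degree = q2.degree := by
              rw [degree_eq_natDegree hcompne, degree_eq_natDegree h0, natDegree_comp,
                natDegree_X_add_C, mul_one]
            have hlt := degree_sub_lt hdeq hcompne hlc
            rw [hdeq] at hlt
            have hle : q2.degree ≤ (j : ℕ) := by
              rw [degree_eq_natDegree h0] at hq2deg ⊢
              exact_mod_cast Nat.lt_succ_iff.mp (by exact_mod_cast hq2deg)
            exact lt_of_lt_of_le hlt hle
      · intro A hA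
        have hsub : ∀ S ∈ s'.powerset, S ∈ (insert a s').powerset := by
          intro S hS
          rw [Finset.mem_powerset] at hS ⊢
          exact hS.trans (Finset.subset_insert a s')
        have hAc : ∀ S ∈ s'.powerset, A + ∑ i ∈ S, b i ≠ 0 := fun S hS => hA S (hsub S hS)
        have hAc2 : ∀ S ∈ s'.powerset, (A + b a) + ∑ i ∈ S, b i ≠ 0 := by
          intro S hS
          have haS : a ∉ S := fun h => ha (Finset.mem_powerset.mp hS h)
          have := hA (insert a S) (by
            rw [Finset.mem_powerset]
            exact Finset.insert_subset_insert a (Finset.mem_powerset.mp hS))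
          rwa [Finset.sum_insert haS, ← add_assoc] at this
        rw [Finset.sum_powerset_insert ha]
        have hcard : (insert a s').card = r + 1 := Finset.card_insert_of_notMem ha
        have h1 : ∀ S ∈ s'.powerset,
            ffall (A + ∑ i ∈ S, b i) ((insert a s').card - S.card)
              * ffall (τ - (A + ∑ i ∈ S, b i)) (S.card + j) / (A + ∑ i ∈ S, b i)
            = (τ - ((r + j : ℕ) : ℚ)) * (ffall (A + ∑ i ∈ S, b i) (r - S.card)
                * ffall (τ - (A + ∑ i ∈ S, b i)) (S.card + j) / (A + ∑ i ∈ S, b i))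
              - ffall (A + ∑ i ∈ S, b i) (r - S.card)
                * ffall (τ - (A + ∑ i ∈ S, b i)) (S.card + (j + 1)) / (A + ∑ i ∈ S, b i) := by
          intro S hS
          have hcle : S.card ≤ r := Finset.card_le_card (Finset.mem_powerset.mp hS)
          have e1 : (insert a s').card - S.card = (r - S.card) + 1 := by rw [hcard]; omega
          have e2 : S.card + (j + 1) = (S.card + j) + 1 := by omega
          rw [e1, e2, ffall_succ, ffall_succ]
          have e3 : ((r - S.card : ℕ) : ℚ) = (r : ℚ) - (S.card : ℚ) := by
            push_cast [Nat.cast_sub hcle]; ring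
          rw [e3]
          push_cast
          ring
        rw [Finset.sum_congr rfl h1, Finset.sum_sub_distrib, ← Finset.mul_sum]
        have h2 : ∀ S ∈ s'.powerset,
            ffall (A + ∑ i ∈ insert a S, b i) ((insert a s').card - (insert a S).card)
              * ffall (τ - (A + ∑ i ∈ insert a S, b i)) ((insert a S).card + j)
              / (A + ∑ i ∈ insert a S, b i)
            = ffall ((A + b a) + ∑ i ∈ S, b i) (r - S.card)
              * ffall (τ - ((A + b a) + ∑ i ∈ S, b i)) (S.card + (j + 1))
              / ((A + b a) + ∑ i ∈ S, b i) := by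
          intro S hS
          have haS : a ∉ S := fun h => ha (Finset.mem_powerset.mp hS h)
          have hcle : S.card ≤ r := Finset.card_le_card (Finset.mem_powerset.mp hS)
          have e1 : (insert a s').card - (insert a S).card = r - S.card := by
            rw [hcard, Finset.card_insert_of_notMem haS]; omega
          have e2 : (insert a S).card + j = S.card + (j + 1) := by
            rw [Finset.card_insert_of_notMem haS]; omega
          rw [e1, e2, Finset.sum_insert haS, ← add_assoc]
        rw [Finset.sum_congr rfl h2]
        rw [hq1 A hAc, hq2 A hAc, hq2 (A + b a) hAc2]
        have hffs : ffall τ (r + j + 1) = ffall τ (r + j) * (τ - ((r + j : ℕ) : ℚ)) := ffall_succ τ (r + j)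
        have e4 : r + (j + 1) = r + j + 1 := by omega
        have e5 : (insert a s').card + j = r + j + 1 := by omega
        rw [e4, e5]
        have e6 : ∑ i ∈ insert a s', b i = b a + ∑ i ∈ s', b i := Finset.sum_insert ha
        rw [e6]
        simp only [eval_add, eval_mul, eval_sub, eval_C, eval_comp, eval_X]
        rw [hffs]
        ring

lemma key_zero {ι : Type*} [DecidableEq ι] (τ A : ℚ) (s : Finset ι) (b : ι → ℚ)
    (hA : ∀ S ∈ s.powerset, A + ∑ i ∈ S, b i ≠ 0) :
    ∑ S ∈ s.powerset, ffall (A + ∑ i ∈ S, b i) (s.card - S.card)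
        * ffall (τ - (A + ∑ i ∈ S, b i)) S.card / (A + ∑ i ∈ S, b i)
      = ffall τ s.card / (A + ∑ i ∈ s, b i) := by
  obtain ⟨q, hdeg, h⟩ := key_poly τ s b 0
  have hq0 : q = 0 := by
    rw [← Polynomial.degree_eq_bot]
    exact Nat.WithBot.lt_zero_iff.mp (by exact_mod_cast hdeg)
  have := h A hA
  simpa [hq0] using this

lemma key_refl {ι : Type*} [DecidableEq ι] (τ A : ℚ) (s : Finset ι) (b : ι → ℚ)
    (hA : ∀ S ∈ s.powerset, τ - (A + ∑ i ∈ S, b i) ≠ 0) :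
    ∑ S ∈ s.powerset, ffall (A + ∑ i ∈ S, b i) (s.card - S.card)
        * ffall (τ - (A + ∑ i ∈ S, b i)) S.card / (τ - (A + ∑ i ∈ S, b i))
      = ffall τ s.card / (τ - A) := by
  have hcond : ∀ S ∈ s.powerset, (τ - A - ∑ i ∈ s, b i) + ∑ i ∈ S, b i ≠ 0 := by
    intro S hS
    have hSs : S ⊆ s := Finset.mem_powerset.mp hS
    have h1 : ∑ i ∈ s \ S, b i = ∑ i ∈ s, b i - ∑ i ∈ S, b i :=
      Finset.sum_sdiff_eq_sub hSs
    have := hA (s \ S) (Finset.mem_powerset.mpr (Finset.sdiff_subset))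
    rw [h1] at this
    intro hc
    exact this (by linarith)
  have hmain := key_zero τ (τ - A - ∑ i ∈ s, b i) s b hcond
  rw [show (τ - A - ∑ i ∈ s, b i) + ∑ i ∈ s, b i = τ - A by ring] at hmain
  rw [← hmain]
  refine Finset.sum_nbij' (fun S => s \ S) (fun S => s \ S) ?_ ?_ ?_ ?_ ?_
  · intro S hS
    exact Finset.mem_powerset.mpr Finset.sdiff_subset
  · intro S hS
    exact Finset.mem_powerset.mpr Finset.sdiff_subset
  · intro S hS
    exact Finset.sdiff_sdiff_eq_self (Finset.mem_powerset.mp hS)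
  · intro S hS
    exact Finset.sdiff_sdiff_eq_self (Finset.mem_powerset.mp hS)
  · intro S hS
    have hSs : S ⊆ s := Finset.mem_powerset.mp hS
    have h1 : ∑ i ∈ s \ S, b i = ∑ i ∈ s, b i - ∑ i ∈ S, b i :=
      Finset.sum_sdiff_eq_sub hSs
    have h2 : (s \ S).card = s.card - S.card := Finset.card_sdiff_of_subset hSs
    have hle := Finset.card_le_card hSs
    rw [h1, h2, show s.card - (s.card - S.card) = S.card from by omega]
    have e1 : (τ - A - ∑ i ∈ s, b i) + (∑ i ∈ s, b i - ∑ i ∈ S, b i)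
        = τ - (A + ∑ i ∈ S, b i) := by ring
    rw [e1, show τ - (τ - (A + ∑ i ∈ S, b i)) = A + ∑ i ∈ S, b i from by ring]
    ring

lemma key_main {ι : Type*} [DecidableEq ι] (τ A : ℚ) (s : Finset ι) (b : ι → ℚ)
    (h1 : ∀ S ∈ s.powerset, A + ∑ i ∈ S, b i ≠ 0)
    (h2 : ∀ S ∈ s.powerset, τ - (A + ∑ i ∈ S, b i) ≠ 0) :
    ∑ S ∈ s.powerset, τ * ffall (A + ∑ i ∈ S, b i) (s.card - S.card)
        * ffall (τ - (A + ∑ i ∈ S, b i)) S.card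
        / ((A + ∑ i ∈ S, b i) * (τ - (A + ∑ i ∈ S, b i)))
      = ffall τ s.card * (τ - A + (A + ∑ i ∈ s, b i)) / ((A + ∑ i ∈ s, b i) * (τ - A)) := by
  have hsplit : ∀ S ∈ s.powerset,
      τ * ffall (A + ∑ i ∈ S, b i) (s.card - S.card) * ffall (τ - (A + ∑ i ∈ S, b i)) S.card
        / ((A + ∑ i ∈ S, b i) * (τ - (A + ∑ i ∈ S, b i)))
      = ffall (A + ∑ i ∈ S, b i) (s.card - S.card)
          * ffall (τ - (A + ∑ i ∈ S, b i)) S.card / (A + ∑ i ∈ S, b i)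
        + ffall (A + ∑ i ∈ S, b i) (s.card - S.card)
          * ffall (τ - (A + ∑ i ∈ S, b i)) S.card / (τ - (A + ∑ i ∈ S, b i)) := by
    intro S hS
    have ha1 := h1 S hS
    have ha2 := h2 S hS
    field_simp
    ring
  rw [Finset.sum_congr rfl hsplit, Finset.sum_add_distrib, key_zero τ A s b h1,
    key_refl τ A s b h2]
  have hc1 : A + ∑ i ∈ s, b i ≠ 0 := h1 s (Finset.mem_powerset.mpr le_rfl)
  have hc2 : τ - A ≠ 0 := by
    have := h2 ∅ (Finset.mem_powerset.mpr (Finset.empty_subset s))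
    simpa using this
  field_simp

lemma sum_orderIsoOfFin {α M : Type*} [LinearOrder α] [AddCommMonoid M]
    (s : Finset α) {ℓ : ℕ} (h : s.card = ℓ) (v : α → M) :
    ∑ i ∈ s, v i = ∑ j : Fin ℓ, v (s.orderIsoOfFin h j) := by
  rw [← Finset.sum_attach s (fun i => v i)]
  exact (Equiv.sum_comp (s.orderIsoOfFin h).toEquiv (fun i => v ↑i)).symm

lemma prod_orderIsoOfFin {α M : Type*} [LinearOrder α] [CommMonoid M]
    (s : Finset α) {ℓ : ℕ} (h : s.card = ℓ) (v : α → M) :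
    ∏ i ∈ s, v i = ∏ j : Fin ℓ, v (s.orderIsoOfFin h j) := by
  rw [← Finset.prod_attach s (fun i => v i)]
  exact (Equiv.prod_comp (s.orderIsoOfFin h).toEquiv (fun i => v ↑i)).symm

lemma bell_split (x : ℕ → ℚ) {k ℓ : ℕ} (m n : ℕ) (hmn : m ≤ n)
    (S : Finset (Fin k)) (hS : S.card = ℓ) :
    (∑ g ∈ (Finset.Nat.antidiagonalTuple ℓ m).filter (fun g => ∀ i, 0 < g i),
        ∏ i, x (g i) / ((g i).factorial : ℚ)) *
      (∑ h ∈ (Finset.Nat.antidiagonalTuple (k - ℓ) (n - m)).filter (fun h => ∀ i, 0 < h i),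
        ∏ i, x (h i) / ((h i).factorial : ℚ))
    = ∑ f ∈ ((Finset.Nat.antidiagonalTuple k n).filter (fun f => ∀ i, 0 < f i)).filter
        (fun f => ∑ i ∈ S, f i = m), ∏ i, x (f i) / ((f i).factorial : ℚ) := by
  have hSc : Sᶜ.card = k - ℓ := by
    rw [Finset.card_compl, Fintype.card_fin, hS]
  set e1 := S.orderIsoOfFin hS with he1
  set e2 := Sᶜ.orderIsoOfFin hSc with he2
  set F : (Fin ℓ → ℕ) × (Fin (k - ℓ) → ℕ) → (Fin k → ℕ) := fun p i =>
    if hi : i ∈ S then p.1 (e1.symm ⟨i, hi⟩) else p.2 (e2.symm ⟨i, Finset.mem_compl.mpr hi⟩)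
    with hF
  have hFS : ∀ p (j : Fin ℓ), F p (e1 j) = p.1 j := by
    intro p j
    simp only [hF]
    rw [dif_pos (e1 j).2]
    rw [show (⟨((e1 j : {y // y ∈ S}) : Fin k), (e1 j).2⟩ : {y // y ∈ S}) = e1 j from
      Subtype.coe_eta _ _, OrderIso.symm_apply_apply]
  have hFSc : ∀ p (j : Fin (k - ℓ)), F p (e2 j) = p.2 j := by
    intro p j
    have hnS : ((e2 j : {y // y ∈ Sᶜ}) : Fin k) ∉ S := Finset.mem_compl.mp (e2 j).2
    simp only [hF]
    rw [dif_neg hnS]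
    rw [show (⟨((e2 j : {y // y ∈ Sᶜ}) : Fin k), Finset.mem_compl.mpr hnS⟩ : {y // y ∈ Sᶜ})
      = e2 j from Subtype.coe_eta _ _, OrderIso.symm_apply_apply]
  have hsumS : ∀ p, ∑ i ∈ S, F p i = ∑ j, p.1 j := by
    intro p
    rw [sum_orderIsoOfFin S hS]
    exact Finset.sum_congr rfl fun j _ => hFS p j
  have hsumSc : ∀ p, ∑ i ∈ Sᶜ, F p i = ∑ j, p.2 j := by
    intro p
    rw [sum_orderIsoOfFin Sᶜ hSc]
    exact Finset.sum_congr rfl fun j _ => hFSc p j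
  rw [Finset.sum_mul_sum, ← Finset.sum_product']
  refine Finset.sum_nbij' F
    (fun f => (fun j => f (e1 j), fun j => f (e2 j))) ?_ ?_ ?_ ?_ ?_
  · -- forward membership
    rintro ⟨g, h⟩ hp
    rw [Finset.mem_product] at hp
    obtain ⟨hg, hh⟩ := hp
    rw [Finset.mem_filter, Finset.Nat.mem_antidiagonalTuple] at hg hh
    rw [Finset.mem_filter, Finset.mem_filter, Finset.Nat.mem_antidiagonalTuple]
    have hS1 : ∑ i ∈ S, F (g, h) i = m := by rw [hsumS]; exact hg.1
    have hS2 : ∑ i ∈ Sᶜ, F (g, h) i = n - m := by rw [hsumSc]; exact hh.1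
    refine ⟨⟨?_, ?_⟩, hS1⟩
    · rw [← Finset.sum_add_sum_compl S, hS1, hS2]; omega
    · intro i
      by_cases hi : i ∈ S
      · have : F (g, h) i = g (e1.symm ⟨i, hi⟩) := dif_pos hi
        rw [this]; exact hg.2 _
      · have : F (g, h) i = h (e2.symm ⟨i, Finset.mem_compl.mpr hi⟩) := dif_neg hi
        rw [this]; exact hh.2 _
  · -- backward membership
    intro f hf
    rw [Finset.mem_filter, Finset.mem_filter, Finset.Nat.mem_antidiagonalTuple] at hf
    obtain ⟨⟨hsum, hpos⟩, hm⟩ := hf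
    rw [Finset.mem_product]
    constructor
    · rw [Finset.mem_filter, Finset.Nat.mem_antidiagonalTuple]
      refine ⟨?_, fun j => hpos _⟩
      rw [← sum_orderIsoOfFin S hS f]; exact hm
    · rw [Finset.mem_filter, Finset.Nat.mem_antidiagonalTuple]
      refine ⟨?_, fun j => hpos _⟩
      rw [← sum_orderIsoOfFin Sᶜ hSc f]
      have := Finset.sum_add_sum_compl S f
      omega
  · -- left inverse
    rintro ⟨g, h⟩ _
    ext j
    · simp only
      rw [hFS]
    · simp only
      rw [hFSc]
  · -- right inverse
    intro f _
    funext i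
    by_cases hi : i ∈ S
    · simp only [hF]
      rw [dif_pos hi]
      show f ↑(e1 (e1.symm ⟨i, hi⟩)) = f i
      rw [OrderIso.apply_symm_apply]
    · simp only [hF]
      rw [dif_neg hi]
      show f ↑(e2 (e2.symm ⟨i, Finset.mem_compl.mpr hi⟩)) = f i
      rw [OrderIso.apply_symm_apply]
  · -- values
    rintro ⟨g, h⟩ _
    simp only
    rw [← Finset.prod_mul_prod_compl S]
    rw [prod_orderIsoOfFin S hS, prod_orderIsoOfFin Sᶜ hSc]
    rw [Finset.prod_congr rfl fun j _ => congrArg (fun t => x t / (t.factorial : ℚ)) (hFS (g, h) j),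
        Finset.prod_congr rfl fun j _ => congrArg (fun t => x t / (t.factorial : ℚ)) (hFSc (g, h) j)]

/-- Generalized binomial coefficient `C(z, j) = z(z-1)⋯(z-j+1)/j!` for `z : ℚ`. -/
def gchoose (z : ℚ) (j : ℕ) : ℚ :=
  (∏ i ∈ Finset.range j, (z - i)) / (j.factorial : ℚ)

/-- Partial Bell polynomial `B_{n,k}(x_1, x_2, …)` expressed as a weighted sum over
compositions of `n` into `k` positive parts. -/
def bellB (x : ℕ → ℚ) (n k : ℕ) : ℚ :=
  ((n.factorial : ℚ) / (k.factorial : ℚ)) *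
    ∑ f ∈ (Finset.Nat.antidiagonalTuple k n).filter (fun f => ∀ i, 0 < f i),
      ∏ i, x (f i) / ((f i).factorial : ℚ)

lemma gchoose_eq (z : ℚ) (j : ℕ) : gchoose z j = ffall z j / (j.factorial : ℚ) := rfl

/-- Convolution formula for partial Bell polynomials ([BGW12, Corollary 11]). -/
theorem bell_convolution (x : ℕ → ℚ) (n k : ℕ) (τ α₀ α₁ α₂ : ℚ)
    (α : ℕ → ℕ → ℚ) (hα : ∀ ℓ m, α ℓ m = α₀ + α₁ * ℓ + α₂ * m)
    (hne : ∀ ℓ m, ℓ ≤ k → ℓ ≤ m → m ≤ n → α ℓ m ≠ 0 ∧ τ - α ℓ m ≠ 0) :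
    ∑ ℓ ∈ Finset.range (k + 1), ∑ m ∈ Finset.Icc ℓ n,
      (τ * gchoose (α ℓ m) (k - ℓ) * gchoose (τ - α ℓ m) ℓ * (n.choose m : ℚ)) /
        (α ℓ m * (τ - α ℓ m) * (k.choose ℓ : ℚ)) * (bellB x m ℓ * bellB x (n - m) (k - ℓ))
    = (τ - α 0 0 + α k n) / (α k n * (τ - α 0 0)) * gchoose τ k * bellB x n k := by
  classical
  have hk00 : α 0 0 = α₀ := by rw [hα]; push_cast; ring
  set Ts : Finset (Fin k → ℕ) :=
    (Finset.Nat.antidiagonalTuple k n).filter (fun f => ∀ i, 0 < f i) with hTs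
  set W : (Fin k → ℕ) → ℚ := fun f => ∏ i, x (f i) / ((f i).factorial : ℚ) with hW
  set c : ℕ → ℕ → ℚ := fun ℓ m =>
    (n.factorial : ℚ) * τ * ffall (α ℓ m) (k - ℓ) * ffall (τ - α ℓ m) ℓ /
      (α ℓ m * (τ - α ℓ m) * ((k.factorial : ℚ) * (k.factorial : ℚ))) with hc
  have hfactk : ((k.factorial : ℚ)) ≠ 0 := by exact_mod_cast k.factorial_ne_zero
  -- Step 1 : rewrite each (ℓ, m) summand as a double sum over subsets and compositions
  have key_lhs : ∀ ℓ ∈ Finset.range (k + 1), ∀ m ∈ Finset.Icc ℓ n,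
      (τ * gchoose (α ℓ m) (k - ℓ) * gchoose (τ - α ℓ m) ℓ * (n.choose m : ℚ)) /
          (α ℓ m * (τ - α ℓ m) * (k.choose ℓ : ℚ)) * (bellB x m ℓ * bellB x (n - m) (k - ℓ))
      = ∑ S ∈ Finset.powersetCard ℓ (Finset.univ : Finset (Fin k)),
          ∑ f ∈ Ts.filter (fun f => ∑ i ∈ S, f i = m), c ℓ m * W f := by
    intro ℓ hℓ m hm
    have hℓk : ℓ ≤ k := Nat.lt_succ_iff.mp (Finset.mem_range.mp hℓ)
    obtain ⟨hℓm, hmn⟩ := Finset.mem_Icc.mp hm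
    obtain ⟨hα1, hα2⟩ := hne ℓ m hℓk hℓm hmn
    have hcount : ∑ S ∈ Finset.powersetCard ℓ (Finset.univ : Finset (Fin k)),
        ∑ f ∈ Ts.filter (fun f => ∑ i ∈ S, f i = m), W f
        = (k.choose ℓ : ℚ) *
          ((∑ g ∈ (Finset.Nat.antidiagonalTuple ℓ m).filter (fun g => ∀ i, 0 < g i),
              ∏ i, x (g i) / ((g i).factorial : ℚ)) *
           (∑ h ∈ (Finset.Nat.antidiagonalTuple (k - ℓ) (n - m)).filter (fun h => ∀ i, 0 < h i),
              ∏ i, x (h i) / ((h i).factorial : ℚ))) := by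
      rw [Finset.sum_congr rfl
        (fun S hS => (bell_split x m n hmn S (Finset.mem_powersetCard.mp hS).2).symm)]
      rw [Finset.sum_const, Finset.card_powersetCard, Finset.card_univ, Fintype.card_fin,
        nsmul_eq_mul]
    have hpull : ∑ S ∈ Finset.powersetCard ℓ (Finset.univ : Finset (Fin k)),
        ∑ f ∈ Ts.filter (fun f => ∑ i ∈ S, f i = m), c ℓ m * W f
        = c ℓ m * ∑ S ∈ Finset.powersetCard ℓ (Finset.univ : Finset (Fin k)),
            ∑ f ∈ Ts.filter (fun f => ∑ i ∈ S, f i = m), W f := by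
      rw [Finset.mul_sum]
      exact Finset.sum_congr rfl fun S _ => (Finset.mul_sum _ _ _).symm
    rw [hpull, hcount]
    -- now a scalar identity
    have hnm : (n.choose m : ℚ) * (m.factorial : ℚ) * ((n - m).factorial : ℚ)
        = (n.factorial : ℚ) := by
      exact_mod_cast congrArg (Nat.cast : ℕ → ℚ)
        (Nat.choose_mul_factorial_mul_factorial hmn)
    have hkl : (k.choose ℓ : ℚ) * (ℓ.factorial : ℚ) * ((k - ℓ).factorial : ℚ)
        = (k.factorial : ℚ) := by
      exact_mod_cast congrArg (Nat.cast : ℕ → ℚ)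
        (Nat.choose_mul_factorial_mul_factorial hℓk)
    rw [bellB, bellB, gchoose_eq, gchoose_eq, hc]
    simp only
    rw [← hnm, ← hkl]
    have h1 : ((m.factorial : ℚ)) ≠ 0 := by exact_mod_cast m.factorial_ne_zero
    have h2 : (((n - m).factorial : ℚ)) ≠ 0 := by exact_mod_cast (n - m).factorial_ne_zero
    have h3 : ((ℓ.factorial : ℚ)) ≠ 0 := by exact_mod_cast ℓ.factorial_ne_zero
    have h4 : (((k - ℓ).factorial : ℚ)) ≠ 0 := by exact_mod_cast (k - ℓ).factorial_ne_zero
    have h5 : ((k.choose ℓ : ℚ)) ≠ 0 := by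
      exact_mod_cast Nat.ne_of_gt (Nat.choose_pos hℓk)
    field_simp
  rw [Finset.sum_congr rfl (fun ℓ hℓ => Finset.sum_congr rfl (fun m hm => key_lhs ℓ hℓ m hm))]
  -- Step 2: merge the m-sum into the composition sum
  have step2 : ∀ ℓ ∈ Finset.range (k + 1),
      ∑ m ∈ Finset.Icc ℓ n, ∑ S ∈ Finset.powersetCard ℓ (Finset.univ : Finset (Fin k)),
        ∑ f ∈ Ts.filter (fun f => ∑ i ∈ S, f i = m), c ℓ m * W f
      = ∑ S ∈ Finset.powersetCard ℓ (Finset.univ : Finset (Fin k)),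
          ∑ f ∈ Ts, c S.card (∑ i ∈ S, f i) * W f := by
    intro ℓ hℓ
    rw [Finset.sum_comm]
    refine Finset.sum_congr rfl fun S hS => ?_
    have hcard : S.card = ℓ := (Finset.mem_powersetCard.mp hS).2
    have hmaps : ∀ f ∈ Ts, (∑ i ∈ S, f i) ∈ Finset.Icc ℓ n := by
      intro f hf
      rw [hTs, Finset.mem_filter, Finset.Nat.mem_antidiagonalTuple] at hf
      obtain ⟨hsum, hpos⟩ := hf
      rw [Finset.mem_Icc]
      refine ⟨?_, ?_⟩
      · calc ℓ = S.card • 1 := by simp [hcard]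
          _ ≤ ∑ i ∈ S, f i := Finset.card_nsmul_le_sum S f 1 (fun i _ => hpos i)
      · calc ∑ i ∈ S, f i ≤ ∑ i, f i := Finset.sum_le_sum_of_subset (Finset.subset_univ S)
          _ = n := hsum
    calc ∑ m ∈ Finset.Icc ℓ n, ∑ f ∈ Ts.filter (fun f => ∑ i ∈ S, f i = m), c ℓ m * W f
        = ∑ m ∈ Finset.Icc ℓ n, ∑ f ∈ Ts.filter (fun f => ∑ i ∈ S, f i = m),
            c S.card (∑ i ∈ S, f i) * W f := by
          refine Finset.sum_congr rfl fun m hm => Finset.sum_congr rfl fun f hf => ?_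
          rw [(Finset.mem_filter.mp hf).2, hcard]
      _ = ∑ f ∈ Ts, c S.card (∑ i ∈ S, f i) * W f :=
          Finset.sum_fiberwise_of_maps_to hmaps _
  rw [Finset.sum_congr rfl step2]
  -- Step 3: combine the ℓ-sum of powersetCard sums into a single powerset sum
  have step3 : ∑ ℓ ∈ Finset.range (k + 1),
      ∑ S ∈ Finset.powersetCard ℓ (Finset.univ : Finset (Fin k)),
        ∑ f ∈ Ts, c S.card (∑ i ∈ S, f i) * W f
      = ∑ S ∈ (Finset.univ : Finset (Fin k)).powerset,
          ∑ f ∈ Ts, c S.card (∑ i ∈ S, f i) * W f := by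
    rw [Finset.sum_powerset (Finset.univ : Finset (Fin k))
      (fun S => ∑ f ∈ Ts, c S.card (∑ i ∈ S, f i) * W f), Finset.card_univ, Fintype.card_fin]
  rw [step3, Finset.sum_comm]
  -- Step 4: apply the key identity for each composition f
  have step4 : ∀ f ∈ Ts,
      ∑ S ∈ (Finset.univ : Finset (Fin k)).powerset, c S.card (∑ i ∈ S, f i) * W f
      = (n.factorial : ℚ) / ((k.factorial : ℚ) * (k.factorial : ℚ)) * (ffall τ k *
          (τ - α 0 0 + α k n) / (α k n * (τ - α 0 0))) * W f := by
    intro f hf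
    rw [hTs, Finset.mem_filter, Finset.Nat.mem_antidiagonalTuple] at hf
    obtain ⟨hsum, hpos⟩ := hf
    set b : Fin k → ℚ := fun i => α₁ + α₂ * (f i : ℚ) with hb
    have hαS : ∀ S : Finset (Fin k), α S.card (∑ i ∈ S, f i) = α₀ + ∑ i ∈ S, b i := by
      intro S
      rw [hα, hb]
      rw [Finset.sum_add_distrib, Finset.sum_const, nsmul_eq_mul, ← Finset.mul_sum]
      push_cast
      ring
    have hcond : ∀ S : Finset (Fin k),
        α S.card (∑ i ∈ S, f i) ≠ 0 ∧ τ - α S.card (∑ i ∈ S, f i) ≠ 0 := by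
      intro S
      refine hne S.card (∑ i ∈ S, f i) ?_ ?_ ?_
      · calc S.card ≤ (Finset.univ : Finset (Fin k)).card :=
            Finset.card_le_card (Finset.subset_univ S)
          _ = k := by rw [Finset.card_univ, Fintype.card_fin]
      · calc S.card = S.card • 1 := by simp
          _ ≤ ∑ i ∈ S, f i := Finset.card_nsmul_le_sum S f 1 (fun i _ => hpos i)
      · calc ∑ i ∈ S, f i ≤ ∑ i, f i := Finset.sum_le_sum_of_subset (Finset.subset_univ S)
          _ = n := hsum
    have h1 : ∀ S ∈ (Finset.univ : Finset (Fin k)).powerset, α₀ + ∑ i ∈ S, b i ≠ 0 := by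
      intro S _
      rw [← hαS S]
      exact (hcond S).1
    have h2 : ∀ S ∈ (Finset.univ : Finset (Fin k)).powerset,
        τ - (α₀ + ∑ i ∈ S, b i) ≠ 0 := by
      intro S _
      rw [← hαS S]
      exact (hcond S).2
    have hkm := key_main τ α₀ (Finset.univ : Finset (Fin k)) b h1 h2
    have huniv : α₀ + ∑ i ∈ (Finset.univ : Finset (Fin k)), b i = α k n := by
      rw [← hαS Finset.univ, Finset.card_univ, Fintype.card_fin, hsum]
    have hτA : τ - α₀ = τ - α 0 0 := by rw [hk00]
    rw [huniv, Finset.card_univ, Fintype.card_fin, hτA] at hkm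
    have hterm : ∀ S ∈ (Finset.univ : Finset (Fin k)).powerset,
        c S.card (∑ i ∈ S, f i) * W f
        = ((n.factorial : ℚ) / ((k.factorial : ℚ) * (k.factorial : ℚ)) * W f) *
            (τ * ffall (α₀ + ∑ i ∈ S, b i) (k - S.card)
              * ffall (τ - (α₀ + ∑ i ∈ S, b i)) S.card
              / ((α₀ + ∑ i ∈ S, b i) * (τ - (α₀ + ∑ i ∈ S, b i)))) := by
      intro S _
      rw [hc]
      simp only
      rw [← hαS S]
      field_simp
    rw [Finset.sum_congr rfl hterm, ← Finset.mul_sum, hkm]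
    ring
  rw [Finset.sum_congr rfl step4]
  -- Step 5: final bookkeeping
  rw [← Finset.mul_sum]
  have hbell : bellB x n k = ((n.factorial : ℚ) / (k.factorial : ℚ)) * ∑ f ∈ Ts, W f := by
    rw [bellB, hTs, hW]
  rw [hbell, gchoose_eq]
  by_cases hkn : k ≤ n
  · obtain ⟨hαkn, -⟩ := hne k n le_rfl hkn le_rfl
    have hτα : τ - α 0 0 ≠ 0 := (hne 0 0 (Nat.zero_le k) le_rfl (Nat.zero_le n)).2
    field_simp
  · have hTsempty : Ts = ∅ := by
      rw [hTs, Finset.eq_empty_iff_forall_notMem]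
      intro f hf
      rw [Finset.mem_filter, Finset.Nat.mem_antidiagonalTuple] at hf
      obtain ⟨hsum, hpos⟩ := hf
      have : k ≤ ∑ i, f i := by
        calc k = (Finset.univ : Finset (Fin k)).card • 1 := by
              simp [Finset.card_univ, Fintype.card_fin]
          _ ≤ ∑ i, f i := Finset.card_nsmul_le_sum _ f 1 (fun i _ => hpos i)
      omega
    have hzero : ∑ f ∈ Ts, W f = 0 := by rw [hTsempty]; simp
    rw [hzero]
    ring
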